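/- If G is a finite split graph with split partition (C, I), then n(G) ≤ gp(G\bar{G}) ≤ n(G) + 1. -/

import Mathlib

open SimpleGraph

variable {V : Type*}

/-- `v` lies on a geodesic (shortest path) between `u` and `w` in `G`. -/
def liesOnGeodesic (G : SimpleGraph V) (u v w : V) : Prop :=
  G.Reachable u w ∧ G.dist u v + G.dist v w = G.dist u w

/-- `S` is a general position set in `G`: no element of `S` lies on a geodesic
between two other elements of `S`. -/
def isGenPosSet (G : SimpleGraph V) (S : Set V) : Prop :=
  ∀ u ∈ S, ∀ v ∈ S, ∀ w ∈ S, u ≠ v → v ≠ w → u ≠ w → ¬ liesOnGeodesic G u v w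

/-- The general position number `gp(G)` of `G`. -/
noncomputable def gpNum (G : SimpleGraph V) : ℕ :=
  sSup {n : ℕ | ∃ S : Set V, isGenPosSet G S ∧ S.ncard = n}

/-- `S` is a `3`-general position set in `G`: no three vertices of `S` lie on a
common geodesic of length at most `3`. -/
def isGP3Set (G : SimpleGraph V) (S : Set V) : Prop :=
  ∀ u ∈ S, ∀ v ∈ S, ∀ w ∈ S, u ≠ v → v ≠ w → u ≠ w →
    ¬ (liesOnGeodesic G u v w ∧ G.dist u w ≤ 3)

/-- The `3`-general position number `gp₃(G)` of `G`. -/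
noncomputable def gp3Num (G : SimpleGraph V) : ℕ :=
  sSup {n : ℕ | ∃ S : Set V, isGP3Set G S ∧ S.ncard = n}

/-- The complementary prism `G\bar{G}`: the disjoint union of `G` (left copy) and
its complement `Gᶜ` (right copy), together with the perfect matching joining each
vertex to its copy. -/
def compPrism (G : SimpleGraph V) : SimpleGraph (V ⊕ V) where
  Adj x y :=
    match x, y with
    | Sum.inl a, Sum.inl b => G.Adj a b
    | Sum.inr a, Sum.inr b => Gᶜ.Adj a b
    | Sum.inl a, Sum.inr b => a = b
    | Sum.inr a, Sum.inl b => a = b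
  symm := by
    refine ⟨?_⟩
    rintro (a | a) (b | b) h
    · exact (G.adj_comm a b).mp h
    · exact Eq.symm h
    · exact Eq.symm h
    · exact (Gᶜ.adj_comm a b).mp h
  loopless := by
    refine ⟨?_⟩
    rintro (a | a) h
    · exact G.loopless.irrefl a h
    · exact Gᶜ.loopless.irrefl a h

/-- The eccentricity of a vertex: the maximum distance to another vertex. -/
noncomputable def ecc (G : SimpleGraph V) (v : V) : ℕ :=
  sSup (Set.range (G.dist v))

/-- The radius of a graph: the minimum eccentricity. -/
noncomputable def rad (G : SimpleGraph V) : ℕ :=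
  sInf (Set.range (ecc G))

/-- The diameter of a graph: the maximum distance between two vertices. -/
noncomputable def graphDiam (G : SimpleGraph V) : ℕ :=
  sSup {n : ℕ | ∃ u v : V, G.dist u v = n}

/-- `\bar{gp}₃(G)`: the maximum, over all `gp₃`-sets `S` of `G`, of the `3`-general
position number of the subgraph of `Gᶜ` induced by the vertices outside `S`. -/
noncomputable def barGp3 (G : SimpleGraph V) : ℕ :=
  sSup {n : ℕ | ∃ S : Set V, isGP3Set G S ∧ S.ncard = gp3Num G ∧
          gp3Num ((Gᶜ).induce Sᶜ) = n}

/-- A cut vertex: its removal disconnects the graph. -/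
def isCutVertex (G : SimpleGraph V) (v : V) : Prop :=
  ¬ (G.induce {u : V | u ≠ v}).Connected

/-- `B` is the vertex set of a `2`-connected subgraph of `G`:
it has at least `3` vertices and removing any one vertex leaves it connected. -/
def isTwoConnectedSet (G : SimpleGraph V) (B : Set V) : Prop :=
  3 ≤ B.ncard ∧ ∀ v ∈ B, (G.induce (B \ {v})).Connected

/-- A block graph: every maximal `2`-connected subgraph is a clique. -/
def isBlockGraph (G : SimpleGraph V) : Prop :=
  ∀ B : Set V, isTwoConnectedSet G B →
    (∀ B' : Set V, isTwoConnectedSet G B' → B ⊆ B' → B = B') →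
    G.IsClique B

/-- Complete multipartite graph: the vertices can be partitioned (via an
equivalence relation, whose classes are the parts) so that two vertices are
adjacent iff they lie in different parts. -/
def isCompleteMultipartite (G : SimpleGraph V) : Prop :=
  ∃ r : V → V → Prop, Equivalence r ∧ ∀ u v, G.Adj u v ↔ ¬ r u v

/-- The hypercube `Q_n`: binary strings of length `n`, two strings being
adjacent when they differ in exactly one coordinate. -/
def hypercube (n : ℕ) : SimpleGraph (Fin n → Bool) where
  Adj x y := {i : Fin n | x i ≠ y i}.ncard = 1
  symm := by
    refine ⟨?_⟩
    intro x y h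
    simpa [ne_comm] using h
  loopless := by
    refine ⟨?_⟩
    intro x
    simp

/-- The block graph `G_k`: a chain of `k+1` triangles `{vᵢ, uᵢ, vᵢ₊₁}`,
with the `v`-vertices `v₁, …, v_{k+2}` indexed by `Fin (k+2)` (left summand)
and the `u`-vertices `u₁, …, u_{k+1}` indexed by `Fin (k+1)` (right summand);
the edges are `vᵢvᵢ₊₁`, `uᵢvᵢ` and `uᵢvᵢ₊₁`. -/
def Gk (k : ℕ) : SimpleGraph (Fin (k + 2) ⊕ Fin (k + 1)) where
  Adj x y :=
    match x, y with
    | Sum.inl a, Sum.inl b => a.val + 1 = b.val ∨ b.val + 1 = a.val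
    | Sum.inl a, Sum.inr b => a.val = b.val ∨ a.val = b.val + 1
    | Sum.inr a, Sum.inl b => b.val = a.val ∨ b.val = a.val + 1
    | Sum.inr _, Sum.inr _ => False
  symm := by
    refine ⟨?_⟩
    rintro (a | a) (b | b) h
    · exact Or.symm h
    · exact h
    · exact h
    · exact h
  loopless := by
    refine ⟨?_⟩
    rintro (a | a) h
    · omega
    · exact h

section MyHelpers

variable {V : Type*}

lemma myAdj_lr (G : SimpleGraph V) (v : V) :
    (compPrism G).Adj (Sum.inl v) (Sum.inr v) := rfl

lemma myDist_lr (G : SimpleGraph V) (v : V) :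
    (compPrism G).dist (Sum.inl v) (Sum.inr v) = 1 :=
  SimpleGraph.dist_eq_one_iff_adj.mpr (myAdj_lr G v)

lemma myCross_dist (G : SimpleGraph V) {u v : V} (h : u ≠ v) :
    (compPrism G).dist (Sum.inl u) (Sum.inr v) = 2 := by
  obtain ⟨w, hw⟩ : ∃ w : (compPrism G).Walk (Sum.inl u) (Sum.inr v), w.length = 2 := by
    by_cases hG : G.Adj u v
    · exact ⟨SimpleGraph.Walk.cons (show (compPrism G).Adj (Sum.inl u) (Sum.inl v) from hG)
        (SimpleGraph.Walk.cons (myAdj_lr G v) SimpleGraph.Walk.nil), rfl⟩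
    · exact ⟨SimpleGraph.Walk.cons (myAdj_lr G u)
        (SimpleGraph.Walk.cons (show (compPrism G).Adj (Sum.inr u) (Sum.inr v) from ⟨h, hG⟩)
          SimpleGraph.Walk.nil), rfl⟩
  have hle : (compPrism G).dist (Sum.inl u) (Sum.inr v) ≤ 2 := hw ▸ SimpleGraph.dist_le w
  have hr : (compPrism G).Reachable (Sum.inl u) (Sum.inr v) := ⟨w⟩
  have h0 : (compPrism G).dist (Sum.inl u) (Sum.inr v) ≠ 0 := by
    intro h0
    exact absurd (hr.dist_eq_zero_iff.mp h0) (by simp)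
  have h1 : (compPrism G).dist (Sum.inl u) (Sum.inr v) ≠ 1 := by
    intro h1
    exact h (SimpleGraph.dist_eq_one_iff_adj.mp h1)
  omega

lemma myGenPos_card_le [Fintype V] (G : SimpleGraph V) {S : Set (V ⊕ V)}
    (hS : isGenPosSet (compPrism G) S) : S.ncard ≤ Fintype.card V + 1 := by
  classical
  by_contra hcon
  push_neg at hcon
  set A : Set V := Sum.inl ⁻¹' S with hA
  set B : Set V := Sum.inr ⁻¹' S with hB
  have hS_eq : S = Sum.inl '' A ∪ Sum.inr '' B := by
    ext x
    cases x with
    | inl a => simp [hA, hB]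
    | inr a => simp [hA, hB]
  have hdisjAB : Disjoint (Sum.inl '' A) (Sum.inr '' B : Set (V ⊕ V)) := by
    rw [Set.disjoint_left]
    rintro x ⟨a, _, rfl⟩ ⟨b, _, hb⟩
    exact Sum.inl_ne_inr hb.symm
  have hcard : S.ncard = A.ncard + B.ncard := by
    rw [hS_eq, Set.ncard_union_eq hdisjAB,
      Set.ncard_image_of_injective _ Sum.inl_injective,
      Set.ncard_image_of_injective _ Sum.inr_injective]
  have hunle : (A ∪ B).ncard ≤ Fintype.card V := by
    have := Set.ncard_le_ncard (Set.subset_univ (A ∪ B)) Set.finite_univ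
    simpa [Set.ncard_univ, Nat.card_eq_fintype_card] using this
  have hsum := Set.ncard_union_add_ncard_inter A B
  have hAB : 1 < (A ∩ B).ncard := by omega
  obtain ⟨u, v, hu, hv, huv⟩ := (Set.one_lt_ncard_iff (A ∩ B).toFinite).mp hAB
  have huA : Sum.inl u ∈ S := hu.1
  have huB : Sum.inr u ∈ S := hu.2
  have hvA : Sum.inl v ∈ S := hv.1
  have hvB : Sum.inr v ∈ S := hv.2
  by_cases hG : G.Adj u v
  · refine hS (Sum.inr u) huB (Sum.inl u) huA (Sum.inl v) hvA (by simp) (by simp [huv])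
      (by simp) ⟨?_, ?_⟩
    · exact ((myAdj_lr G u).symm.reachable).trans
        (show (compPrism G).Adj (Sum.inl u) (Sum.inl v) from hG).reachable
    · rw [SimpleGraph.dist_comm, myDist_lr,
        SimpleGraph.dist_eq_one_iff_adj.mpr (show (compPrism G).Adj (Sum.inl u) (Sum.inl v) from hG),
        SimpleGraph.dist_comm, myCross_dist G huv.symm]
  · refine hS (Sum.inl u) huA (Sum.inr u) huB (Sum.inr v) hvB (by simp) (by simp [huv])
      (by simp) ⟨?_, ?_⟩
    · exact ((myAdj_lr G u).reachable).trans
        (show (compPrism G).Adj (Sum.inr u) (Sum.inr v) from ⟨huv, hG⟩).reachable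
    · rw [myDist_lr,
        SimpleGraph.dist_eq_one_iff_adj.mpr
          (show (compPrism G).Adj (Sum.inr u) (Sum.inr v) from ⟨huv, hG⟩),
        myCross_dist G huv]

end MyHelpers

/-- For a split graph `G` with split partition `(C, I)`:
`n(G) ≤ gp(G\bar{G}) ≤ n(G) + 1`. -/
theorem gp_compPrism_split_bounds {V : Type*} [Fintype V] (G : SimpleGraph V)
    (C I : Set V) (hunion : C ∪ I = Set.univ) (hdisj : Disjoint C I)
    (hC : G.IsClique C) (hI : ∀ u ∈ I, ∀ w ∈ I, ¬ G.Adj u w) :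
    Fintype.card V ≤ gpNum (compPrism G) ∧ gpNum (compPrism G) ≤ Fintype.card V + 1 := by
  classical
  set S₀ : Set (V ⊕ V) := Sum.inl '' C ∪ Sum.inr '' I with hS₀def
  -- distances within S₀
  have key : ∀ x ∈ S₀, ∀ y ∈ S₀, x ≠ y →
      (compPrism G).dist x y = if x.isLeft = y.isLeft then 1 else 2 := by
    rintro x (⟨c1, hc1, rfl⟩ | ⟨i1, hi1, rfl⟩) y (⟨c2, hc2, rfl⟩ | ⟨i2, hi2, rfl⟩) hxy
    · have hne : c1 ≠ c2 := fun h => hxy (by rw [h])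
      simp only [Sum.isLeft, if_pos rfl]
      exact SimpleGraph.dist_eq_one_iff_adj.mpr
        (show (compPrism G).Adj (Sum.inl c1) (Sum.inl c2) from hC hc1 hc2 hne)
    · have hne : c1 ≠ i2 := fun h => Set.disjoint_left.mp hdisj hc1 (h ▸ hi2)
      simpa using myCross_dist G hne
    · have hne : c2 ≠ i1 := fun h => Set.disjoint_left.mp hdisj hc2 (h ▸ hi1)
      rw [SimpleGraph.dist_comm]
      simpa using myCross_dist G hne
    · have hne : i1 ≠ i2 := fun h => hxy (by rw [h])
      simp only [Sum.isLeft, if_pos rfl]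
      exact SimpleGraph.dist_eq_one_iff_adj.mpr
        (show (compPrism G).Adj (Sum.inr i1) (Sum.inr i2) from ⟨hne, hI i1 hi1 i2 hi2⟩)
  have hgen : isGenPosSet (compPrism G) S₀ := by
    rintro x hx y hy z hz hxy hyz hxz ⟨_, heq⟩
    rw [key x hx y hy hxy, key y hy z hz hyz, key x hx z hz hxz] at heq
    by_cases h1 : x.isLeft = y.isLeft <;> by_cases h2 : y.isLeft = z.isLeft <;>
      by_cases h3 : x.isLeft = z.isLeft <;>
      first
        | (exact h3 (h1.trans h2))
        | (exact h1 (h3.trans h2.symm))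
        | (exact h2 (h1.symm.trans h3))
        | simp_all
  have hcard₀ : S₀.ncard = Fintype.card V := by
    have hdisjCI : Disjoint (Sum.inl '' C) (Sum.inr '' I : Set (V ⊕ V)) := by
      rw [Set.disjoint_left]
      rintro x ⟨a, _, rfl⟩ ⟨b, _, hb⟩
      exact Sum.inl_ne_inr hb.symm
    rw [hS₀def, Set.ncard_union_eq hdisjCI,
      Set.ncard_image_of_injective _ Sum.inl_injective,
      Set.ncard_image_of_injective _ Sum.inr_injective,
      ← Set.ncard_union_eq hdisj, hunion, Set.ncard_univ, Nat.card_eq_fintype_card]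
  have hbdd : ∀ m ∈ {n : ℕ | ∃ S : Set (V ⊕ V), isGenPosSet (compPrism G) S ∧ S.ncard = n},
      m ≤ Fintype.card V + 1 := by
    rintro m ⟨S, hS, rfl⟩
    exact myGenPos_card_le G hS
  constructor
  · refine le_csSup ⟨Fintype.card V + 1, fun m hm => hbdd m hm⟩ ⟨S₀, hgen, hcard₀⟩
  · exact csSup_le ⟨Fintype.card V, S₀, hgen, hcard₀⟩ hbdd
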